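/- The small resolution U of the threefold node is homeomorphic to ℂ² × ℙ¹(ℂ) (equivalently, to ℝ⁴ × S²): the total space of the bundle O(−1) ⊕ O(−1) over ℙ¹ is topologically trivial. -/

import Mathlib

open scoped LinearAlgebra.Projectivization

/-- The quotient topology on `ℙ¹(ℂ)`, induced from `ℂ² \ {0}`. -/
instance : TopologicalSpace (ℙ ℂ (Fin 2 → ℂ)) :=
  inferInstanceAs (TopologicalSpace (Quotient (projectivizationSetoid ℂ (Fin 2 → ℂ))))

/-- The small resolution `U ⊂ ℂ⁴ × ℙ¹(ℂ)` of the threefold node, cut out by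
`y₀z₄ − y₁z₃ = 0` and `y₀z₁ + y₁z₂ = 0` for every nonzero representative `(y₀,y₁)`;
it carries the subspace topology of the product. -/
def smallRes : Set ((Fin 4 → ℂ) × ℙ ℂ (Fin 2 → ℂ)) :=
  {p | ∀ (y : Fin 2 → ℂ) (hy : y ≠ 0), Projectivization.mk ℂ y hy = p.2 →
    y 0 * p.1 3 - y 1 * p.1 2 = 0 ∧ y 0 * p.1 0 + y 1 * p.1 1 = 0}

open Complex Topology

noncomputable section

local notation "c!" => starRingEnd ℂ

def nn (y : Fin 2 → ℂ) : ℂ := c! (y 0) * y 0 + c! (y 1) * y 1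

lemma nn_ne_zero {y : Fin 2 → ℂ} (hy : y ≠ 0) : nn y ≠ 0 := by
  have h0 : y 0 ≠ 0 ∨ y 1 ≠ 0 := by
    by_contra h
    push_neg at h
    apply hy
    funext i
    fin_cases i <;> simp [h.1, h.2]
  have e : nn y = ((Complex.normSq (y 0) + Complex.normSq (y 1) : ℝ) : ℂ) := by
    simp [nn, ← Complex.normSq_eq_conj_mul_self]
  rw [e]
  norm_cast
  rcases h0 with h | h
  · exact ne_of_gt (add_pos_of_pos_of_nonneg (Complex.normSq_pos.mpr h) (Complex.normSq_nonneg _))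
  · exact ne_of_gt (add_pos_of_nonneg_of_pos (Complex.normSq_nonneg _) (Complex.normSq_pos.mpr h))

def fwd (z : Fin 4 → ℂ) (y : Fin 2 → ℂ) : Fin 2 → ℂ :=
  ![(c! (y 0) * (c! (z 0) * y 1 - c! (z 1) * y 0) + y 1 * (z 2 * c! (y 0) + z 3 * c! (y 1))) / nn y,
    (c! (y 0) * (c! (z 2) * y 0 + c! (z 3) * y 1) - y 1 * (z 0 * c! (y 1) - z 1 * c! (y 0))) / nn y]

def bwd (w : Fin 2 → ℂ) (y : Fin 2 → ℂ) : Fin 4 → ℂ :=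
  ![(c! (y 0) * c! (w 0) - c! (y 1) * w 1) * y 1 / nn y,
    -((c! (y 0) * c! (w 0) - c! (y 1) * w 1) * y 0) / nn y,
    (c! (y 0) * c! (w 1) + c! (y 1) * w 0) * y 0 / nn y,
    (c! (y 0) * c! (w 1) + c! (y 1) * w 0) * y 1 / nn y]

lemma fwd_smul (z : Fin 4 → ℂ) {y : Fin 2 → ℂ} (hy : y ≠ 0) {t : ℂ} (ht : t ≠ 0) :
    fwd z (t • y) = fwd z y := by
  have hN := nn_ne_zero hy
  have htc : c! t ≠ 0 := by simpa using ht
  have hN' : nn (t • y) = c! t * t * nn y := by simp [nn]; ring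
  funext i
  fin_cases i <;>
  · simp only [fwd, hN', Matrix.cons_val_zero, Matrix.cons_val_one, Matrix.head_cons,
      Pi.smul_apply, smul_eq_mul, map_mul]
    field_simp

lemma bwd_smul (w : Fin 2 → ℂ) {y : Fin 2 → ℂ} (hy : y ≠ 0) {t : ℂ} (ht : t ≠ 0) :
    bwd w (t • y) = bwd w y := by
  have hN := nn_ne_zero hy
  have htc : c! t ≠ 0 := by simpa using ht
  have hN' : nn (t • y) = c! t * t * nn y := by simp [nn]; ring
  funext i
  fin_cases i <;>
  · simp only [bwd, hN', Matrix.cons_val_zero, Matrix.cons_val_one, Matrix.head_cons,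
      Matrix.cons_val_two, Matrix.cons_val_three, Matrix.tail_cons,
      Pi.smul_apply, smul_eq_mul, map_mul]
    field_simp

lemma exists_param {z : Fin 4 → ℂ} {y : Fin 2 → ℂ} (hy : y ≠ 0)
    (h1 : y 0 * z 3 - y 1 * z 2 = 0) (h2 : y 0 * z 0 + y 1 * z 1 = 0) :
    ∃ s t, z = ![s * y 1, -(s * y 0), t * y 0, t * y 1] := by
  have h0 : y 0 ≠ 0 ∨ y 1 ≠ 0 := by
    by_contra h
    push_neg at h
    exact hy (funext fun i => by fin_cases i <;> simp [h.1, h.2])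
  rcases h0 with h | h
  · refine ⟨-(z 1) / y 0, z 2 / y 0, funext fun i => ?_⟩
    fin_cases i <;> simp <;> field_simp
    · linear_combination h2
    · linear_combination h1
  · refine ⟨z 0 / y 1, z 3 / y 1, funext fun i => ?_⟩
    fin_cases i <;> simp <;> field_simp
    · linear_combination h2
    · linear_combination -h1

lemma fwd_param (s t : ℂ) {y : Fin 2 → ℂ} (hy : y ≠ 0) :
    fwd ![s * y 1, -(s * y 0), t * y 0, t * y 1] y
      = ![c! (y 0) * c! s + y 1 * t, c! (y 0) * c! t - y 1 * s] := by
  have hN : c! (y 0) * y 0 + c! (y 1) * y 1 ≠ 0 := by simpa [nn] using nn_ne_zero hy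
  funext i
  fin_cases i <;>
  · simp only [fwd, nn, Matrix.cons_val_zero, Matrix.cons_val_one, Matrix.head_cons,
      Matrix.cons_val_two, Matrix.cons_val_three, Matrix.tail_cons, map_mul, map_add,
      map_sub, map_neg, Complex.conj_conj, Fin.zero_eta, Fin.mk_one, Fin.reduceFinMk]
    field_simp
    ring

lemma bwd_param (A B : ℂ) {y : Fin 2 → ℂ} (hy : y ≠ 0) :
    bwd ![c! (y 0) * c! A + y 1 * B, c! (y 0) * c! B - y 1 * A] y
      = ![A * y 1, -(A * y 0), B * y 0, B * y 1] := by
  have hN : c! (y 0) * y 0 + c! (y 1) * y 1 ≠ 0 := by simpa [nn] using nn_ne_zero hy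
  funext i
  fin_cases i <;>
  · simp only [bwd, nn, Matrix.cons_val_zero, Matrix.cons_val_one, Matrix.head_cons,
      Matrix.cons_val_two, Matrix.cons_val_three, Matrix.tail_cons, map_mul, map_add,
      map_sub, map_neg, Complex.conj_conj, Fin.zero_eta, Fin.mk_one, Fin.reduceFinMk]
    field_simp
    ring

lemma bwd_fwd {z : Fin 4 → ℂ} {y : Fin 2 → ℂ} (hy : y ≠ 0)
    (h1 : y 0 * z 3 - y 1 * z 2 = 0) (h2 : y 0 * z 0 + y 1 * z 1 = 0) :
    bwd (fwd z y) y = z := by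
  obtain ⟨s, t, rfl⟩ := exists_param hy h1 h2
  rw [fwd_param s t hy, bwd_param s t hy]

lemma bwd_eq_param (w : Fin 2 → ℂ) {y : Fin 2 → ℂ} (hy : y ≠ 0) :
    bwd w y = ![((c! (y 0) * c! (w 0) - c! (y 1) * w 1) / nn y) * y 1,
      -(((c! (y 0) * c! (w 0) - c! (y 1) * w 1) / nn y) * y 0),
      ((c! (y 0) * c! (w 1) + c! (y 1) * w 0) / nn y) * y 0,
      ((c! (y 0) * c! (w 1) + c! (y 1) * w 0) / nn y) * y 1] := by
  funext i
  fin_cases i <;>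
    simp [bwd, div_mul_eq_mul_div, neg_div]

lemma fwd_bwd {w : Fin 2 → ℂ} {y : Fin 2 → ℂ} (hy : y ≠ 0) :
    fwd (bwd w y) y = w := by
  have hN : c! (y 0) * y 0 + c! (y 1) * y 1 ≠ 0 := by simpa [nn] using nn_ne_zero hy
  have hN2 : y 0 * c! (y 0) + y 1 * c! (y 1) ≠ 0 := by
    rw [show y 0 * c! (y 0) + y 1 * c! (y 1) = c! (y 0) * y 0 + c! (y 1) * y 1 by ring]
    exact hN
  rw [bwd_eq_param w hy, fwd_param _ _ hy]
  funext i
  fin_cases i <;>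
  · simp only [nn, Matrix.cons_val_zero, Matrix.cons_val_one, Matrix.head_cons, map_mul,
      map_add, map_sub, map_div₀, Complex.conj_conj, Fin.zero_eta, Fin.mk_one]
    field_simp [show c! (y 0) * y 0 + y 1 * c! (y 1) ≠ 0 by rwa [mul_comm (y 1)]]
    ring

lemma bwd_cond {w : Fin 2 → ℂ} {y : Fin 2 → ℂ} (hy : y ≠ 0) :
    y 0 * bwd w y 3 - y 1 * bwd w y 2 = 0 ∧ y 0 * bwd w y 0 + y 1 * bwd w y 1 = 0 := by
  constructor <;>
  · simp only [bwd, Matrix.cons_val_zero, Matrix.cons_val_one, Matrix.head_cons,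
      Matrix.cons_val_two, Matrix.cons_val_three, Matrix.tail_cons]
    ring

abbrev NZ := { v : Fin 2 → ℂ // v ≠ 0 }

def pr : NZ → ℙ ℂ (Fin 2 → ℂ) := Projectivization.mk' ℂ

lemma isQuotientMap_pr : IsQuotientMap pr := isQuotientMap_quot_mk

lemma continuous_pr : Continuous pr := continuous_quot_mk

/-- Scalar multiplication by a unit as a homeomorphism of nonzero vectors. -/
def smulNZ (t : ℂˣ) : NZ ≃ₜ NZ where
  toFun v := ⟨(t : ℂ) • v.1, smul_ne_zero t.ne_zero v.2⟩
  invFun v := ⟨((t⁻¹ : ℂˣ) : ℂ) • v.1, smul_ne_zero t⁻¹.ne_zero v.2⟩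
  left_inv v := Subtype.ext (by simp [smul_smul])
  right_inv v := Subtype.ext (by simp [smul_smul])
  continuous_toFun := (continuous_subtype_val.const_smul (t : ℂ)).subtype_mk _
  continuous_invFun := (continuous_subtype_val.const_smul ((t⁻¹ : ℂˣ) : ℂ)).subtype_mk _

lemma isOpenMap_pr : IsOpenMap pr := by
  intro U hU
  rw [← isQuotientMap_pr.isOpen_preimage]
  have h : pr ⁻¹' (pr '' U) = ⋃ t : ℂˣ, (smulNZ t) '' U := by
    ext v
    simp only [Set.mem_preimage, Set.mem_image, Set.mem_iUnion]
    constructor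
    · rintro ⟨u, hu, huv⟩
      obtain ⟨a, ha⟩ := (Projectivization.mk_eq_mk_iff ℂ _ _ u.2 v.2).mp (by
        simpa [pr] using huv)
      refine ⟨a⁻¹, u, hu, Subtype.ext ?_⟩
      simp [smulNZ, ← ha, smul_smul, Units.smul_def, inv_mul_cancel₀ a.ne_zero]
    · rintro ⟨t, u, hu, rfl⟩
      refine ⟨u, hu, ?_⟩
      simp only [pr, Projectivization.mk'_eq_mk]
      rw [Projectivization.mk_eq_mk_iff]
      refine ⟨t⁻¹, ?_⟩
      show ((t⁻¹ : ℂˣ) : ℂ) • ((t : ℂ) • u.1) = u.1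
      simp [smul_smul, inv_mul_cancel₀ t.ne_zero]
  rw [h]
  exact isOpen_iUnion fun t => (smulNZ t).isOpenMap _ hU

lemma isQuotientMap_prodMap (E : Type*) [TopologicalSpace E] :
    IsQuotientMap (Prod.map (id : E → E) pr) :=
  (IsOpenMap.id.prodMap isOpenMap_pr).isQuotientMap
    (continuous_id.prodMap continuous_pr)
    (Function.surjective_id.prodMap isQuotientMap_pr.surjective)

lemma continuous_fwd : Continuous (fun q : (Fin 4 → ℂ) × NZ => fwd q.1 q.2.1) := by
  have hc : ∀ i : Fin 2, Continuous fun q : (Fin 4 → ℂ) × NZ => q.2.1 i :=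
    fun i => (continuous_apply i).comp (continuous_subtype_val.comp continuous_snd)
  have hz : ∀ i : Fin 4, Continuous fun q : (Fin 4 → ℂ) × NZ => q.1 i :=
    fun i => (continuous_apply i).comp continuous_fst
  have hN : Continuous fun q : (Fin 4 → ℂ) × NZ => nn q.2.1 := by
    simp only [nn, starRingEnd_apply]
    exact (((hc 0).star.mul (hc 0)).add ((hc 1).star.mul (hc 1)))
  apply continuous_pi
  intro i
  fin_cases i <;>
  · simp only [fwd, Matrix.cons_val_zero, Matrix.cons_val_one, Matrix.head_cons,
      starRingEnd_apply]
    exact Continuous.div (by continuity) hN (fun q => nn_ne_zero q.2.2)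

lemma continuous_bwd : Continuous (fun q : (Fin 2 → ℂ) × NZ => bwd q.1 q.2.1) := by
  have hc : ∀ i : Fin 2, Continuous fun q : (Fin 2 → ℂ) × NZ => q.2.1 i :=
    fun i => (continuous_apply i).comp (continuous_subtype_val.comp continuous_snd)
  have hw : ∀ i : Fin 2, Continuous fun q : (Fin 2 → ℂ) × NZ => q.1 i :=
    fun i => (continuous_apply i).comp continuous_fst
  have hN : Continuous fun q : (Fin 2 → ℂ) × NZ => nn q.2.1 := by
    simp only [nn, starRingEnd_apply]
    exact (((hc 0).star.mul (hc 0)).add ((hc 1).star.mul (hc 1)))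
  apply continuous_pi
  intro i
  fin_cases i <;>
  · simp only [bwd, Matrix.cons_val_zero, Matrix.cons_val_one, Matrix.head_cons,
      Matrix.cons_val_two, Matrix.cons_val_three, Matrix.tail_cons, starRingEnd_apply]
    exact Continuous.div (by continuity) hN (fun q => nn_ne_zero q.2.2)

def Fwd (p : (Fin 4 → ℂ) × ℙ ℂ (Fin 2 → ℂ)) : Fin 2 → ℂ :=
  Projectivization.lift (fun y : NZ => fwd p.1 y.1)
    (by
      rintro ⟨a, ha⟩ ⟨b, hb⟩ t h
      simp only at h ⊢
      have ht : t ≠ 0 := by rintro rfl; rw [zero_smul] at h; exact ha h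
      rw [h]
      exact fwd_smul _ hb ht)
    p.2

def Bwd (p : (Fin 2 → ℂ) × ℙ ℂ (Fin 2 → ℂ)) : Fin 4 → ℂ :=
  Projectivization.lift (fun y : NZ => bwd p.1 y.1)
    (by
      rintro ⟨a, ha⟩ ⟨b, hb⟩ t h
      simp only at h ⊢
      have ht : t ≠ 0 := by rintro rfl; rw [zero_smul] at h; exact ha h
      rw [h]
      exact bwd_smul _ hb ht)
    p.2

lemma continuous_FwdPair :
    Continuous fun p : (Fin 4 → ℂ) × ℙ ℂ (Fin 2 → ℂ) => (Fwd p, p.2) := by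
  rw [(isQuotientMap_prodMap _).continuous_iff]
  have h : ((fun p : (Fin 4 → ℂ) × ℙ ℂ (Fin 2 → ℂ) => (Fwd p, p.2)) ∘ Prod.map id pr)
      = fun q : (Fin 4 → ℂ) × NZ => (fwd q.1 q.2.1, pr q.2) := rfl
  rw [h]
  exact continuous_fwd.prodMk (continuous_pr.comp continuous_snd)

lemma continuous_BwdPair :
    Continuous fun p : (Fin 2 → ℂ) × ℙ ℂ (Fin 2 → ℂ) => (Bwd p, p.2) := by
  rw [(isQuotientMap_prodMap _).continuous_iff]
  have h : ((fun p : (Fin 2 → ℂ) × ℙ ℂ (Fin 2 → ℂ) => (Bwd p, p.2)) ∘ Prod.map id pr)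
      = fun q : (Fin 2 → ℂ) × NZ => (bwd q.1 q.2.1, pr q.2) := rfl
  rw [h]
  exact continuous_bwd.prodMk (continuous_pr.comp continuous_snd)

lemma mem_smallRes_bwd (w : Fin 2 → ℂ) (ℓ : ℙ ℂ (Fin 2 → ℂ)) :
    (Bwd (w, ℓ), ℓ) ∈ smallRes := by
  intro y' hy' hmk
  have hmk' : Projectivization.mk ℂ y' hy' = ℓ := hmk
  subst hmk'
  exact bwd_cond hy'

def theHomeo : ↥smallRes ≃ₜ ((Fin 2 → ℂ) × ℙ ℂ (Fin 2 → ℂ)) where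
  toFun p := (Fwd p.1, p.1.2)
  invFun q := ⟨(Bwd q, q.2), mem_smallRes_bwd q.1 q.2⟩
  left_inv p := by
    obtain ⟨⟨z, ℓ⟩, hp⟩ := p
    induction ℓ using Projectivization.ind with
    | h y hy =>
      obtain ⟨h1, h2⟩ := hp y hy rfl
      exact Subtype.ext (Prod.ext (bwd_fwd hy h1 h2) rfl)
  right_inv q := by
    obtain ⟨w, ℓ⟩ := q
    induction ℓ using Projectivization.ind with
    | h y hy =>
      exact Prod.ext (show fwd (bwd w y) y = w from fwd_bwd hy) rfl
  continuous_toFun := continuous_FwdPair.comp continuous_subtype_val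
  continuous_invFun := continuous_BwdPair.subtype_mk _

/-- The small resolution of the threefold node (the total space of
`O(−1) ⊕ O(−1)` over `ℙ¹`) is homeomorphic to `ℂ² × ℙ¹(ℂ)`. -/
theorem stmt6 :
    Nonempty (↥smallRes ≃ₜ ((Fin 2 → ℂ) × ℙ ℂ (Fin 2 → ℂ))) := by
  exact ⟨theHomeo⟩

end
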